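/- arXiv:1112.5769 — 3 statements merged into one kernel-verified Lean document; each statement's English description precedes it below -/
import Mathlib

section
/- Let $q \geq 1$ and suppose $x_1, \dots, x_q > 0$. For $1 \leq k \leq q$, let $e_k(x_1,\dots,x_q)$ denote the $k$-th elementary symmetric polynomial. Then for each $k \geq 2$, the function $\phi_k(x_1,\dots,x_q) = e_k(x_1,\dots,x_q)/e_{k-1}(x_1,\dots,x_q)$ is nondecreasing in each variable (on the domain of positive variables). -/
open Finset

/-- `k`-th elementary symmetric polynomial of `x : Fin q → ℝ`. -/
noncomputable def esymm (q k : ℕ) (x : Fin q → ℝ) : ℝ :=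
  ∑ s ∈ Finset.powersetCard k (Finset.univ : Finset (Fin q)), ∏ i ∈ s, x i

noncomputable def E {ι : Type*} [DecidableEq ι] (x : ι → ℝ) (s : Finset ι) (k : ℕ) : ℝ :=
  ∑ t ∈ s.powersetCard k, ∏ i ∈ t, x i

lemma E_zero {ι : Type*} [DecidableEq ι] (x : ι → ℝ) (s : Finset ι) : E x s 0 = 1 := by
  simp [E, Finset.powersetCard_zero]

lemma E_insert {ι : Type*} [DecidableEq ι] (x : ι → ℝ) {a : ι} {s : Finset ι} (ha : a ∉ s)
    (k : ℕ) : E x (insert a s) (k + 1) = x a * E x s k + E x s (k + 1) := by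
  have hdisj : Disjoint (powersetCard (k + 1) s) ((powersetCard k s).image (insert a)) := by
    rw [Finset.disjoint_left]
    intro t ht htim
    rw [Finset.mem_powersetCard] at ht
    simp only [Finset.mem_image] at htim
    obtain ⟨u, hu, rfl⟩ := htim
    exact ha (ht.1 (Finset.mem_insert_self a u))
  have hinj : ∀ t ∈ powersetCard k s, ∀ u ∈ powersetCard k s, insert a t = insert a u → t = u := by
    intro t ht u hu htu
    rw [Finset.mem_powersetCard] at ht hu
    have h1 : a ∉ t := fun h => ha (ht.1 h)
    have h2 : a ∉ u := fun h => ha (hu.1 h)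
    rw [← Finset.erase_insert h1, ← Finset.erase_insert h2, htu]
  rw [E, powersetCard_succ_insert ha, Finset.sum_union hdisj, Finset.sum_image hinj]
  have hcong : ∀ t ∈ powersetCard k s, (∏ i ∈ insert a t, x i) = x a * ∏ i ∈ t, x i := by
    intro t ht
    rw [Finset.mem_powersetCard] at ht
    exact Finset.prod_insert (fun h => ha (ht.1 h))
  rw [Finset.sum_congr rfl hcong, ← Finset.mul_sum, E, E]
  ring

lemma E_nonneg {ι : Type*} [DecidableEq ι] {x : ι → ℝ} {s : Finset ι}
    (hx : ∀ i ∈ s, 0 ≤ x i) (k : ℕ) : 0 ≤ E x s k := by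
  refine Finset.sum_nonneg fun t ht => Finset.prod_nonneg fun i hi => ?_
  rw [Finset.mem_powersetCard] at ht
  exact hx i (ht.1 hi)

lemma E_pos {ι : Type*} [DecidableEq ι] {x : ι → ℝ} {s : Finset ι}
    (hx : ∀ i ∈ s, 0 < x i) {k : ℕ} (hk : k ≤ s.card) : 0 < E x s k := by
  refine Finset.sum_pos (fun t ht => Finset.prod_pos fun i hi => ?_)
    (Finset.powersetCard_nonempty.2 hk)
  rw [Finset.mem_powersetCard] at ht
  exact hx i (ht.1 hi)

lemma E_zero_succ {ι : Type*} [DecidableEq ι] {x : ι → ℝ} {s : Finset ι}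
    (hx : ∀ i ∈ s, 0 ≤ x i) {k : ℕ} (h : E x s k = 0) : E x s (k + 1) = 0 := by
  have hterm : ∀ t ∈ s.powersetCard k, (∏ i ∈ t, x i) = 0 := by
    rw [E] at h
    exact (Finset.sum_eq_zero_iff_of_nonneg fun t ht => Finset.prod_nonneg fun i hi => by
      rw [Finset.mem_powersetCard] at ht; exact hx i (ht.1 hi)).1 h
  refine Finset.sum_eq_zero fun u hu => ?_
  rw [Finset.mem_powersetCard] at hu
  obtain ⟨t, hts, htc⟩ := Finset.exists_subset_card_eq (s := u) (n := k) (by omega)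
  have htm : t ∈ s.powersetCard k :=
    Finset.mem_powersetCard.2 ⟨hts.trans hu.1, htc⟩
  rw [← Finset.prod_sdiff hts, hterm t htm, mul_zero]

lemma E_newton {ι : Type*} [DecidableEq ι] {x : ι → ℝ} {s : Finset ι}
    (hx : ∀ i ∈ s, 0 ≤ x i) : ∀ k : ℕ, E x s (k + 2) * E x s k ≤ E x s (k + 1) ^ 2 := by
  induction s using Finset.induction with
  | empty =>
    intro k
    have h1 : E x (∅ : Finset ι) (k + 1) = 0 := by
      rw [E, Finset.powersetCard_eq_empty.2 (by simp), Finset.sum_empty]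
    have h2 : E x (∅ : Finset ι) (k + 2) = 0 := by
      rw [E, Finset.powersetCard_eq_empty.2 (by simp), Finset.sum_empty]
    rw [h1, h2]; simp
  | @insert a s ha IH =>
    have hx' : ∀ i ∈ s, 0 ≤ x i := fun i hi => hx i (Finset.mem_insert_of_mem hi)
    have IH' := IH hx'
    have hxa : 0 ≤ x a := hx a (Finset.mem_insert_self a s)
    have hnn : ∀ n, 0 ≤ E x s n := E_nonneg hx'
    intro k
    match k with
    | 0 =>
      rw [E_insert x ha, E_insert x ha, E_zero, E_zero]
      have h := IH' 0
      rw [E_zero] at h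
      nlinarith [hnn 1, hnn 2]
    | (m + 1) =>
      rw [E_insert x ha, E_insert x ha, E_insert x ha]
      -- need cross inequality: E (m+1) * E (m+2) ≥ E m * E (m+3)
      have h1 := IH' m
      have h2 : E x s (m + 3) * E x s (m + 1) ≤ E x s (m + 2) ^ 2 := IH' (m + 1)
      have cross : E x s m * E x s (m + 3) ≤ E x s (m + 1) * E x s (m + 2) := by
        rcases eq_or_lt_of_le (hnn (m + 1)) with h | h
        · have z2 : E x s (m + 2) = 0 := E_zero_succ hx' h.symm
          have z3 : E x s (m + 3) = 0 := E_zero_succ hx' z2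
          rw [← h, z3]; ring_nf; rfl
        · rcases eq_or_lt_of_le (hnn (m + 2)) with h' | h'
          · have z3 : E x s (m + 3) = 0 := E_zero_succ hx' h'.symm
            rw [← h', z3]
            nlinarith
          · have hprod := mul_le_mul h1 h2 (mul_nonneg (hnn _) (hnn _)) (sq_nonneg _)
            have key : (E x s m * E x s (m + 3)) * (E x s (m + 1) * E x s (m + 2)) ≤
                (E x s (m + 1) * E x s (m + 2)) * (E x s (m + 1) * E x s (m + 2)) := by
              nlinarith [hprod]
            exact le_of_mul_le_mul_right (by nlinarith) (by positivity)
      nlinarith [hnn m, hnn (m + 1), hnn (m + 2), hnn (m + 3), sq_nonneg (x a)]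

/-- For positive variables, `φ_k = e_k / e_{k-1}` (`k ≥ 2`) is nondecreasing
in each variable. -/
theorem stmt0 (q : ℕ) (hq : 1 ≤ q) (k : ℕ) (hk : 2 ≤ k) (hkq : k ≤ q)
    (x y : Fin q → ℝ) (hx : ∀ i, 0 < x i) (hy : ∀ i, 0 < y i)
    (j : Fin q) (hxy : x j ≤ y j) (heq : ∀ i, i ≠ j → x i = y i) :
    esymm q k x / esymm q (k - 1) x ≤ esymm q k y / esymm q (k - 1) y := by
  classical
  set s : Finset (Fin q) := Finset.univ.erase j with hs
  have hjs : j ∉ s := Finset.notMem_erase j _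
  have huniv : (Finset.univ : Finset (Fin q)) = insert j s := by
    rw [hs, Finset.insert_erase (Finset.mem_univ j)]
  have hesymm : ∀ z : Fin q → ℝ, ∀ n, esymm q n z = E z Finset.univ n := fun z n => rfl
  have hEeq : ∀ n, E x s n = E y s n := by
    intro n
    refine Finset.sum_congr rfl fun t ht => Finset.prod_congr rfl fun i hi => ?_
    rw [Finset.mem_powersetCard] at ht
    have : i ∈ s := ht.1 hi
    exact heq i (Finset.ne_of_mem_erase this)
  obtain ⟨m, rfl⟩ : ∃ m, k = m + 2 := ⟨k - 2, by omega⟩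
  have hcard : s.card = q - 1 := by
    rw [hs, Finset.card_erase_of_mem (Finset.mem_univ j), Finset.card_univ, Fintype.card_fin]
  have hm : m ≤ s.card := by omega
  have hm1 : m + 1 ≤ s.card ∨ E x s (m + 1) = E x s (m + 1) := Or.inr rfl
  have hxs : ∀ i ∈ s, 0 < x i := fun i _ => hx i
  have hnn : ∀ n, 0 ≤ E x s n := E_nonneg (fun i hi => (hxs i hi).le)
  have hA0 : 0 < E x s m := E_pos hxs hm
  have newton := E_newton (s := s) (x := x) (fun i hi => (hxs i hi).le) m
  -- rewrite both sides
  have hex : ∀ n, esymm q (n + 1) x = x j * E x s n + E x s (n + 1) := by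
    intro n; rw [hesymm, huniv, E_insert x hjs]
  have hey : ∀ n, esymm q (n + 1) y = y j * E x s n + E x s (n + 1) := by
    intro n; rw [hesymm, huniv, E_insert y hjs, hEeq n, hEeq (n + 1)]
  have hsub : m + 2 - 1 = m + 1 := rfl
  rw [hsub, hex (m + 1), hex m, hey (m + 1), hey m]
  have hdx : 0 < x j * E x s m + E x s (m + 1) := by
    have := hx j; nlinarith [hnn (m + 1)]
  have hdy : 0 < y j * E x s m + E x s (m + 1) := by
    have := hy j; nlinarith [hnn (m + 1)]
  rw [div_le_div_iff₀ hdx hdy]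
  nlinarith [mul_nonneg (sub_nonneg.2 hxy) (sub_nonneg.2 newton), hnn (m + 1), hnn (m + 2)]
end

section
/- Suppose $A = (a_1,\dots,a_q)$ and $B = (b_1,\dots,b_q)$ are tuples of positive reals with $0 < a_1 \leq \cdots \leq a_q$, $0 < b_1 \leq \cdots \leq b_q$, and $\sum_{i=1}^k a_i \leq \sum_{i=1}^k b_i$ for all $k = 1,\dots,q$ (i.e., $B$ is weakly supermajorized by $A$). Then for every $k = 1, \dots, q$, $e_k(b_1,\dots,b_q)/e_{k-1}(b_1,\dots,b_q) \geq e_k(a_1,\dots,a_q)/e_{k-1}(a_1,\dots,a_q)$, where $e_k$ is the $k$-th elementary symmetric polynomial and $e_0 = 1$. Equivalently, the chain of inequalities $\frac{e_q(B)}{e_q(A)} \geq \frac{e_{q-1}(B)}{e_{q-1}(A)} \geq \cdots \geq \frac{e_1(B)}{e_1(A)} \geq 1$ holds. -/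
open Finset

namespace MyEsymm

lemma esymm_zero' (s : Multiset ℝ) : s.esymm 0 = 1 := by
  simp [Multiset.esymm, Multiset.powersetCard_zero_left]

lemma esymm_nil (k : ℕ) : (0 : Multiset ℝ).esymm (k+1) = 0 := by simp [Multiset.esymm, Multiset.powersetCard_zero_right]

lemma esymm_cons (a : ℝ) (s : Multiset ℝ) (k : ℕ) :
    (a ::ₘ s).esymm (k+1) = s.esymm (k+1) + a * s.esymm k := by
  simp [Multiset.esymm, Multiset.powersetCard_cons, Multiset.map_map, Function.comp,
    Multiset.sum_map_mul_left]

lemma esymm_nonneg {s : Multiset ℝ} (hs : ∀ x ∈ s, 0 ≤ x) (k : ℕ) : 0 ≤ s.esymm k := by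
  refine Multiset.sum_nonneg ?_
  intro x hx
  obtain ⟨t, ht, rfl⟩ := Multiset.mem_map.mp hx
  obtain ⟨hts, -⟩ := Multiset.mem_powersetCard.mp ht
  exact Multiset.prod_nonneg fun y hy => hs y (Multiset.mem_of_le hts hy)

lemma esymm_pos {s : Multiset ℝ} (hs : ∀ x ∈ s, 0 < x) :
    ∀ k, k ≤ Multiset.card s → 0 < s.esymm k := by
  induction s using Multiset.induction with
  | empty =>
    intro k hk
    obtain rfl : k = 0 := Nat.le_zero.mp (by simpa using hk)
    rw [esymm_zero']; norm_num
  | cons a s ih =>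
    intro k hk
    have ha : 0 < a := hs a (Multiset.mem_cons_self a s)
    have hs' : ∀ x ∈ s, 0 < x := fun x hx => hs x (Multiset.mem_cons_of_mem hx)
    match k with
    | 0 => rw [esymm_zero']; norm_num
    | k + 1 =>
      rw [esymm_cons]
      have h1 : 0 ≤ s.esymm (k+1) := esymm_nonneg (fun x hx => (hs' x hx).le) _
      have h2 : 0 < s.esymm k := ih hs' k (by simpa using hk)
      nlinarith

/-- Newton-type log-concavity: for nonneg entries, `e_{i+1} e_{j+1} ≥ e_i e_{j+2}` for `i ≤ j`. -/
lemma esymm_logConcave {s : Multiset ℝ} (hs : ∀ x ∈ s, 0 ≤ x) :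
    ∀ i j, i ≤ j → s.esymm i * s.esymm (j+2) ≤ s.esymm (i+1) * s.esymm (j+1) := by
  induction s using Multiset.induction with
  | empty =>
    intro i j hij
    have h2 : (0 : Multiset ℝ).esymm (j+2) = 0 := esymm_nil _
    have h3 : (0 : Multiset ℝ).esymm (j+1) = 0 := esymm_nil _
    rw [h2, h3, mul_zero, mul_zero]
  | cons a s ih =>
    have ha : 0 ≤ a := hs a (Multiset.mem_cons_self a s)
    have hs' : ∀ x ∈ s, 0 ≤ x := fun x hx => hs x (Multiset.mem_cons_of_mem hx)
    have hnn : ∀ m, 0 ≤ s.esymm m := esymm_nonneg hs'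
    have ihs := ih hs'
    intro i j hij
    match i with
    | 0 =>
      rw [esymm_zero']
      rw [esymm_cons, esymm_cons, esymm_cons, esymm_zero']
      have k1 := ihs 0 j (Nat.zero_le _)
      rw [esymm_zero'] at k1
      nlinarith [hnn j, hnn (j+1), mul_nonneg ha (hnn j), mul_nonneg (mul_nonneg ha ha) (hnn j),
        mul_nonneg ha (mul_nonneg (hnn 1) (hnn j))]
    | i + 1 =>
      have hij' : i + 1 ≤ j := hij
      rw [esymm_cons, esymm_cons, esymm_cons, esymm_cons]
      obtain ⟨j', rfl⟩ : ∃ j', j = j' + 1 := ⟨j - 1, by omega⟩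
      have k1 : s.esymm (i+1) * s.esymm (j'+3) ≤ s.esymm (i+2) * s.esymm (j'+2) :=
        ihs (i+1) (j'+1) hij'
      have k2 : s.esymm i * s.esymm (j'+3) ≤ s.esymm (i+2) * s.esymm (j'+1) := by
        rcases eq_or_lt_of_le hij' with h | h
        · have e : i = j' := by omega
          subst e
          rw [mul_comm (s.esymm (i+2))]
          exact ihs i (i+1) (by omega)
        · calc s.esymm i * s.esymm (j'+3) ≤ s.esymm (i+1) * s.esymm (j'+2) :=
                ihs i (j'+1) (by omega)
            _ ≤ s.esymm (i+2) * s.esymm (j'+1) := ihs (i+1) j' (by omega)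
      have k3 : s.esymm i * s.esymm (j'+2) ≤ s.esymm (i+1) * s.esymm (j'+1) :=
        ihs i j' (by omega)
      have k2' := mul_le_mul_of_nonneg_left k2 ha
      have k3' := mul_le_mul_of_nonneg_left k3 (mul_nonneg ha ha)
      show (s.esymm (i+1) + a * s.esymm i) * (s.esymm (j'+3) + a * s.esymm (j'+2)) ≤
        (s.esymm (i+2) + a * s.esymm (i+1)) * (s.esymm (j'+2) + a * s.esymm (j'+1))
      nlinarith [k1, k2', k3']


lemma esymm_eq_multiset (q k : ℕ) (x : Fin q → ℝ) :
    esymm q k x = (Multiset.map x Finset.univ.val).esymm k :=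
  (Finset.esymm_map_val x Finset.univ k).symm

lemma map_val_cons {q : ℕ} (x : Fin q → ℝ) (s : Finset (Fin q)) (i : Fin q) (hi : i ∈ s) :
    Multiset.map x s.val = x i ::ₘ Multiset.map x ((s.erase i).val) := by
  conv_lhs => rw [← Multiset.cons_erase (Finset.mem_def.mp hi)]
  rw [Multiset.map_cons, Finset.erase_val]


lemma esymm_pos' {q m : ℕ} (hm : m ≤ q) {x : Fin q → ℝ} (hx : ∀ i, 0 < x i) :
    0 < esymm q m x := by
  rw [esymm_eq_multiset]
  refine esymm_pos ?_ m ?_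
  · intro y hy
    obtain ⟨i, -, rfl⟩ := Multiset.mem_map.mp hy
    exact hx i
  · simpa using hm

lemma mem_map_nonneg {q : ℕ} {x : Fin q → ℝ} (hx : ∀ i, 0 < x i) (s : Finset (Fin q)) :
    ∀ y ∈ Multiset.map x s.val, (0:ℝ) ≤ y := by
  intro y hy
  obtain ⟨i, -, rfl⟩ := Multiset.mem_map.mp hy
  exact (hx i).le

/-- L1: increasing one coordinate increases `e_k/e_{k-1}`. -/
lemma ratio_mono {q k : ℕ} (hk : 1 ≤ k) (hkq : k ≤ q) {x : Fin q → ℝ} (hx : ∀ m, 0 < x m)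
    (i : Fin q) {v : ℝ} (hv : x i ≤ v) :
    esymm q k x / esymm q (k-1) x ≤
      esymm q k (Function.update x i v) / esymm q (k-1) (Function.update x i v) := by
  set x' := Function.update x i v with hx'def
  have hx' : ∀ m, 0 < x' m := by
    intro m
    rcases eq_or_ne m i with rfl | h
    · simpa [hx'def] using lt_of_lt_of_le (hx m) hv
    · simpa [hx'def, Function.update_of_ne h] using hx m
  have d1 : 0 < esymm q (k-1) x := esymm_pos' (le_trans (Nat.sub_le _ _) hkq) hx
  have d2 : 0 < esymm q (k-1) x' := esymm_pos' (le_trans (Nat.sub_le _ _) hkq) hx'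
  rw [div_le_div_iff₀ d1 d2]
  set T : Multiset ℝ := Multiset.map x ((Finset.univ.erase i).val) with hT
  have hTnn : ∀ m, 0 ≤ T.esymm m :=
    esymm_nonneg (mem_map_nonneg hx _)
  have hT' : Multiset.map x' ((Finset.univ.erase i).val) = T := by
    rw [hT]
    refine Multiset.map_congr rfl ?_
    intro m hm
    have : m ≠ i := Finset.ne_of_mem_erase (Finset.mem_def.mpr hm)
    exact Function.update_of_ne this v x
  have hMx : Multiset.map x Finset.univ.val = x i ::ₘ T :=
    map_val_cons x _ i (Finset.mem_univ i)
  have hMx' : Multiset.map x' Finset.univ.val = v ::ₘ T := by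
    rw [map_val_cons x' _ i (Finset.mem_univ i), hT']
    congr 1
    simp [hx'def]
  obtain ⟨k', rfl⟩ : ∃ k', k = k' + 1 := ⟨k - 1, by omega⟩
  simp only [Nat.add_sub_cancel]
  match k' with
  | 0 =>
    rw [esymm_eq_multiset, esymm_eq_multiset, esymm_eq_multiset, esymm_eq_multiset, hMx, hMx',
      esymm_cons, esymm_cons, esymm_zero', esymm_zero', esymm_zero']
    nlinarith [hTnn 1]
  | k'' + 1 =>
    rw [esymm_eq_multiset, esymm_eq_multiset, esymm_eq_multiset, esymm_eq_multiset, hMx, hMx',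
      esymm_cons, esymm_cons, esymm_cons, esymm_cons]
    have key := esymm_logConcave (mem_map_nonneg hx (Finset.univ.erase i)) k'' k'' le_rfl
    rw [← hT] at key
    nlinarith [mul_le_mul_of_nonneg_left key (sub_nonneg.mpr hv)]


lemma cc2 (α β : ℝ) (T : Multiset ℝ) (m : ℕ) :
    (α ::ₘ β ::ₘ T).esymm (m+2) =
      T.esymm (m+2) + (α+β) * T.esymm (m+1) + (α*β) * T.esymm m := by
  rw [show m+2 = m+1+1 from rfl, esymm_cons α _ (m+1), esymm_cons β T (m+1), esymm_cons β T m]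
  ring

lemma cc2' (α β : ℝ) (T : Multiset ℝ) (k : ℕ) (hk : 2 ≤ k) :
    (α ::ₘ β ::ₘ T).esymm k =
      T.esymm k + (α+β) * T.esymm (k-1) + (α*β) * T.esymm (k-2) := by
  obtain ⟨m, rfl⟩ : ∃ m, k = m+2 := ⟨k-2, by omega⟩
  rw [show m+2-1 = m+1 from rfl, show m+2-2 = m from rfl]
  exact cc2 α β T m

lemma cc1 (α β : ℝ) (T : Multiset ℝ) (k : ℕ) (hk : k = 1) :
    (α ::ₘ β ::ₘ T).esymm k = T.esymm 1 + (α+β) := by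
  subst hk
  rw [show (1:ℕ) = 0+1 from rfl, esymm_cons α _ 0, esymm_cons β T 0]
  simp only [esymm_zero']
  ring

lemma cc0 (α β : ℝ) (T : Multiset ℝ) (k : ℕ) (hk : k = 0) :
    (α ::ₘ β ::ₘ T).esymm k = 1 := by subst hk; exact esymm_zero' _

/-- L2: a Robin Hood transfer (sum preserved, product not decreased) increases `e_k/e_{k-1}`. -/
lemma ratio_transfer {q k : ℕ} (hk : 1 ≤ k) (hkq : k ≤ q) {x : Fin q → ℝ} (hx : ∀ m, 0 < x m)
    {i j : Fin q} (hij : i ≠ j) {u v : ℝ} (hu : 0 < u) (hv : 0 < v)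
    (hsum : u + v = x i + x j) (hprod : x i * x j ≤ u * v) :
    esymm q k x / esymm q (k-1) x ≤
      esymm q k (Function.update (Function.update x i u) j v) /
      esymm q (k-1) (Function.update (Function.update x i u) j v) := by
  set x' := Function.update (Function.update x i u) j v with hx'def
  have hx'i : x' i = u := by rw [hx'def, Function.update_of_ne hij, Function.update_self]
  have hx'j : x' j = v := by rw [hx'def, Function.update_self]
  have hx'off : ∀ m, m ≠ i → m ≠ j → x' m = x m := by
    intro m h1 h2
    rw [hx'def, Function.update_of_ne h2, Function.update_of_ne h1]
  have hx' : ∀ m, 0 < x' m := by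
    intro m
    rcases eq_or_ne m i with rfl | h1
    · rwa [hx'i]
    rcases eq_or_ne m j with rfl | h2
    · rwa [hx'j]
    · rw [hx'off m h1 h2]; exact hx m
  have d1 : 0 < esymm q (k-1) x := esymm_pos' (le_trans (Nat.sub_le _ _) hkq) hx
  have d2 : 0 < esymm q (k-1) x' := esymm_pos' (le_trans (Nat.sub_le _ _) hkq) hx'
  rw [div_le_div_iff₀ d1 d2]
  have hjmem : j ∈ Finset.univ.erase i := Finset.mem_erase.mpr ⟨hij.symm, Finset.mem_univ j⟩
  set E : Finset (Fin q) := (Finset.univ.erase i).erase j with hE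
  set T : Multiset ℝ := Multiset.map x E.val with hT
  have hTnn : ∀ m, 0 ≤ T.esymm m := esymm_nonneg (mem_map_nonneg hx _)
  have hP := esymm_logConcave (mem_map_nonneg hx E)
  rw [← hT] at hP
  have hT' : Multiset.map x' E.val = T := by
    rw [hT]
    refine Multiset.map_congr rfl ?_
    intro m hm
    have hm' : m ∈ E := Finset.mem_def.mpr hm
    have h2 : m ≠ j := Finset.ne_of_mem_erase hm'
    have h1 : m ≠ i := Finset.ne_of_mem_erase (Finset.mem_of_mem_erase hm')
    exact hx'off m h1 h2
  have hMx : Multiset.map x Finset.univ.val = x i ::ₘ x j ::ₘ T := by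
    rw [map_val_cons x _ i (Finset.mem_univ i), map_val_cons x _ j hjmem]
  have hMx' : Multiset.map x' Finset.univ.val = u ::ₘ v ::ₘ T := by
    rw [map_val_cons x' _ i (Finset.mem_univ i), map_val_cons x' _ j hjmem, hx'i, hx'j, ← hE, hT']
  have hs0 : 0 ≤ x i + x j := add_nonneg (hx i).le (hx j).le
  rw [esymm_eq_multiset q k x, esymm_eq_multiset q (k-1) x, esymm_eq_multiset q k x',
    esymm_eq_multiset q (k-1) x', hMx, hMx']
  rcases (by omega : k = 1 ∨ k = 2 ∨ 3 ≤ k) with rfl | rfl | hk3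
  · rw [cc1 _ _ _ _ rfl, cc1 _ _ _ _ rfl, cc0 _ _ _ _ rfl, cc0 _ _ _ _ rfl]
    nlinarith [hTnn 1]
  · rw [cc2' _ _ _ _ le_rfl, cc2' _ _ _ _ le_rfl, cc1 _ _ _ _ rfl, cc1 _ _ _ _ rfl]
    rw [show (2:ℕ)-1 = 1 from rfl, show (2:ℕ)-2 = 0 from rfl]
    simp only [esymm_zero']
    rw [hsum]
    have h := mul_le_mul_of_nonneg_right hprod
      (by nlinarith [hTnn 1, hx i, hx j] : (0:ℝ) ≤ T.esymm 1 + (x i + x j))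
    nlinarith [h]
  · obtain ⟨m, rfl⟩ : ∃ m, k = m+3 := ⟨k-3, by omega⟩
    rw [show m+3-1 = m+2 from rfl]
    rw [cc2' (x i) (x j) T (m+3) (by omega), cc2' (x i) (x j) T (m+2) (by omega),
      cc2' u v T (m+3) (by omega), cc2' u v T (m+2) (by omega)]
    rw [show m+3-1 = m+2 from rfl, show m+3-2 = m+1 from rfl, show m+2-1 = m+1 from rfl,
      show m+2-2 = m from rfl]
    have h1' : T.esymm m * T.esymm (m+3) ≤ T.esymm (m+1) * T.esymm (m+2) := by
      rw [show m+3 = m+1+2 from rfl, show m+2 = m+1+1 from rfl]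
      exact hP m (m+1) (Nat.le_succ _)
    have h2 := hP m m le_rfl
    have key : 0 ≤ (u*v - x i * x j) *
        ((T.esymm (m+1) * T.esymm (m+2) - T.esymm m * T.esymm (m+3)) +
         (x i + x j) * (T.esymm (m+1) * T.esymm (m+1) - T.esymm m * T.esymm (m+2))) := by
      apply mul_nonneg (by linarith)
      have h2' := mul_le_mul_of_nonneg_left h2 hs0
      nlinarith [h1', h2']
    rw [hsum]
    nlinarith [key]


/-- partial sums -/
noncomputable def S (q m : ℕ) (y : Fin q → ℝ) : ℝ :=
  ∑ i ∈ Finset.univ.filter (fun i : Fin q => (i : ℕ) < m), y i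

lemma S_top (q : ℕ) (y : Fin q → ℝ) : S q q y = ∑ i, y i := by
  rw [S, Finset.filter_true_of_mem (fun i _ => i.isLt)]

/-- The main chain induction. -/
lemma chain {q k : ℕ} (hk : 1 ≤ k) (hkq : k ≤ q) {b : Fin q → ℝ}
    (hb0 : ∀ i, 0 < b i) (hbM : Monotone b) :
    ∀ d : ℕ, ∀ a : Fin q → ℝ, (∀ i, 0 < a i) → Monotone a →
      (∀ m : ℕ, m ≤ q → S q m a ≤ S q m b) → (∑ i, a i) = (∑ i, b i) →
      (Finset.univ.filter (fun i => a i ≠ b i)).card ≤ d →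
      esymm q k a / esymm q (k-1) a ≤ esymm q k b / esymm q (k-1) b := by
  intro d
  induction d with
  | zero =>
    intro a _ _ _ _ hcard
    have : ∀ i, a i = b i := by
      intro i
      by_contra hne
      have : i ∈ Finset.univ.filter (fun i => a i ≠ b i) := by simp [hne]
      have := Finset.card_pos.mpr ⟨i, this⟩
      omega
    rw [funext this]
  | succ d ih =>
    intro a ha0 haM hS hTot hcard
    by_cases hab : a = b
    · rw [hab]
    -- there is an index where b < a
    have hex : ∃ j, b j < a j := by
      by_contra hno
      push_neg at hno
      apply hab
      funext i
      by_contra hne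
      have hlt : a i < b i := lt_of_le_of_ne (hno i) hne
      have : ∑ i, a i < ∑ i, b i :=
        Finset.sum_lt_sum (fun m _ => hno m) ⟨i, Finset.mem_univ i, hlt⟩
      linarith [hTot]
    set J : Finset (Fin q) := Finset.univ.filter (fun m => b m < a m) with hJ
    have hJne : J.Nonempty := by
      obtain ⟨j, hj⟩ := hex
      exact ⟨j, by simp [hJ, hj]⟩
    set j : Fin q := J.min' hJne with hjdef
    have hjmem : j ∈ J := J.min'_mem hJne
    have hjprop : b j < a j := by simpa [hJ] using hjmem
    have hjmin : ∀ m, m < j → a m ≤ b m := by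
      intro m hm
      by_contra h
      push_neg at h
      have hjm : j ≤ m := J.min'_le m (by simp [hJ, h])
      exact absurd hm (not_lt.mpr hjm)
    -- there is i < j with a i < b i
    set I : Finset (Fin q) := Finset.univ.filter (fun m => m < j ∧ a m < b m) with hI
    have hIne : I.Nonempty := by
      by_contra hno
      rw [Finset.not_nonempty_iff_eq_empty] at hno
      have heq : ∀ m, m < j → a m = b m := by
        intro m hm
        rcases lt_or_eq_of_le (hjmin m hm) with h | h
        · exfalso
          have : m ∈ I := by simp [hI, hm, h]
          rw [hno] at this
          simp at this
        · exact h
      -- then S (j+1) gives a j ≤ b j, contradiction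
      have h1 : S q ((j:ℕ)+1) a ≤ S q ((j:ℕ)+1) b := hS _ (by omega)
      have h2 : S q ((j:ℕ)+1) b < S q ((j:ℕ)+1) a := by
        rw [S, S]
        apply Finset.sum_lt_sum
        · intro m hm
          simp only [Finset.mem_filter] at hm
          rcases lt_or_eq_of_le (Nat.lt_succ_iff.mp hm.2) with h | h
          · exact le_of_eq (heq m (by exact h)).symm
          · have : m = j := Fin.ext h
            subst this
            exact hjprop.le
        · refine ⟨j, by simp, hjprop⟩
      linarith
    set i : Fin q := I.max' hIne with hidef
    have himem : i ∈ I := I.max'_mem hIne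
    have hiprop : i < j ∧ a i < b i := by simpa [hI] using himem
    have hij : i < j := hiprop.1
    have haib : a i < b i := hiprop.2
    have hmid : ∀ m, i < m → m < j → a m = b m := by
      intro m h1 h2
      rcases lt_or_eq_of_le (hjmin m h2) with h | h
      · exfalso
        have hmI : m ∈ I := by simp [hI, h2, h]
        have hmi : m ≤ i := I.le_max' m hmI
        exact absurd h1 (not_lt.mpr hmi)
      · exact h
    set δ : ℝ := min (b i - a i) (a j - b j) with hδ
    have hδpos : 0 < δ := lt_min (by linarith) (by linarith)
    set u : ℝ := a i + δ with hu
    set v : ℝ := a j - δ with hv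
    have hub : u ≤ b i := by rw [hu, hδ]; have := min_le_left (b i - a i) (a j - b j); linarith
    have hvb : b j ≤ v := by rw [hv, hδ]; have := min_le_right (b i - a i) (a j - b j); linarith
    have hbibj : b i ≤ b j := hbM hij.le
    have huv : u ≤ v := le_trans hub (le_trans hbibj hvb)
    have hu0 : 0 < u := lt_trans (ha0 i) (by rw [hu]; linarith)
    have hv0 : 0 < v := lt_of_lt_of_le (hb0 j) hvb
    set a' : Fin q → ℝ := Function.update (Function.update a i u) j v with ha'def
    have hijne : i ≠ j := ne_of_lt hij
    have ha'i : a' i = u := by rw [ha'def, Function.update_of_ne hijne, Function.update_self]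
    have ha'j : a' j = v := by rw [ha'def, Function.update_self]
    have ha'off : ∀ m, m ≠ i → m ≠ j → a' m = a m := by
      intro m h1 h2
      rw [ha'def, Function.update_of_ne h2, Function.update_of_ne h1]
    have ha'0 : ∀ m, 0 < a' m := by
      intro m
      rcases eq_or_ne m i with rfl | h1
      · rwa [ha'i]
      rcases eq_or_ne m j with rfl | h2
      · rwa [ha'j]
      · rw [ha'off m h1 h2]; exact ha0 m
    -- step 1 : f a ≤ f a'
    have step1 : esymm q k a / esymm q (k-1) a ≤ esymm q k a' / esymm q (k-1) a' := by
      rw [ha'def]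
      apply ratio_transfer hk hkq ha0 hijne hu0 hv0
      · rw [hu, hv]; ring
      · rw [hu, hv]; nlinarith [hδpos, huv]
    -- invariants for a'
    have ha'M : Monotone a' := by
      intro m m' hmm'
      rcases eq_or_lt_of_le hmm' with rfl | hlt
      · exact le_rfl
      rcases eq_or_ne m i with rfl | hmi
      · -- m = i
        rcases eq_or_ne m' j with rfl | hm'j
        · rw [ha'i, ha'j]; exact huv
        rcases eq_or_ne m' i with rfl | hm'i
        · exact absurd hlt (lt_irrefl _)
        · rw [ha'i, ha'off m' hm'i hm'j]
          rcases lt_or_ge m' j with h | h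
          · calc u ≤ b i := hub
              _ ≤ b m' := hbM hlt.le
              _ = a m' := (hmid m' hlt h).symm
          · have : j < m' := lt_of_le_of_ne h (Ne.symm hm'j)
            calc u ≤ v := huv
              _ ≤ a j := by rw [hv]; linarith
              _ ≤ a m' := haM this.le
      rcases eq_or_ne m j with rfl | hmj
      · -- m = j
        rcases eq_or_ne m' i with rfl | hm'i
        · exact absurd (lt_trans hij hlt) (lt_irrefl _)
        rcases eq_or_ne m' j with rfl | hm'j
        · exact absurd hlt (lt_irrefl _)
        · rw [ha'j, ha'off m' hm'i hm'j]
          calc v ≤ a j := by rw [hv]; linarith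
            _ ≤ a m' := haM hlt.le
      · -- m off
        rcases eq_or_ne m' i with rfl | hm'i
        · rw [ha'off m hmi hmj, ha'i]
          calc a m ≤ a i := haM hlt.le
            _ ≤ u := by rw [hu]; linarith
        rcases eq_or_ne m' j with rfl | hm'j
        · rw [ha'off m hmi hmj, ha'j]
          rcases lt_or_ge m i with h | h
          · calc a m ≤ a i := haM h.le
              _ ≤ u := by rw [hu]; linarith
              _ ≤ v := huv
          · have him : i < m := lt_of_le_of_ne h (Ne.symm hmi)
            calc a m = b m := hmid m him hlt
              _ ≤ b j := hbM hlt.le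
              _ ≤ v := hvb
        · rw [ha'off m hmi hmj, ha'off m' hm'i hm'j]
          exact haM hmm'
    have ha'le : ∀ m, m < j → a' m ≤ b m := by
      intro m hm
      rcases eq_or_ne m i with rfl | hmi
      · rw [ha'i]; exact hub
      · rw [ha'off m hmi (ne_of_lt hm)]
        exact hjmin m hm
    have hsum_two : ∀ F : Finset (Fin q), i ∈ F → j ∈ F →
        ∑ t ∈ F, a' t = ∑ t ∈ F, a t := by
      intro F hiF hjF
      have key : ∀ t ∈ F, a' t = a t + (if t = i then δ else 0) - (if t = j then δ else 0) := by
        intro t _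
        rcases eq_or_ne t i with rfl | h1
        · rw [ha'i, if_pos rfl, if_neg hijne, hu]; ring
        rcases eq_or_ne t j with rfl | h2
        · rw [ha'j, if_neg (Ne.symm hijne), if_pos rfl, hv]
          ring
        · rw [ha'off t h1 h2, if_neg h1, if_neg h2]; ring
      rw [Finset.sum_congr rfl key]
      rw [Finset.sum_sub_distrib, Finset.sum_add_distrib,
        Finset.sum_ite_eq' F i (fun _ => δ), Finset.sum_ite_eq' F j (fun _ => δ)]
      simp [hiF, hjF]
    have ha'S : ∀ m : ℕ, m ≤ q → S q m a' ≤ S q m b := by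
      intro m hm
      rcases le_or_gt m (j:ℕ) with h | h
      · rw [S, S]
        apply Finset.sum_le_sum
        intro t ht
        simp only [Finset.mem_filter] at ht
        exact ha'le t (by
          have : (t:ℕ) < (j:ℕ) := lt_of_lt_of_le ht.2 h
          exact this)
      · have : S q m a' = S q m a := by
          rw [S, S]
          apply hsum_two
          · simp only [Finset.mem_filter]
            refine ⟨Finset.mem_univ i, ?_⟩
            have h2 : (i:ℕ) < (j:ℕ) := hij
            omega
          · simp only [Finset.mem_filter]
            exact ⟨Finset.mem_univ j, h⟩
        rw [this]
        exact hS m hm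
    have ha'Tot : (∑ t, a' t) = ∑ t, b t := by
      rw [hsum_two Finset.univ (Finset.mem_univ i) (Finset.mem_univ j)]
      exact hTot
    -- card decrease
    have hcard' : (Finset.univ.filter (fun t => a' t ≠ b t)).card ≤ d := by
      have hmincase : u = b i ∨ v = b j := by
        rcases min_cases (b i - a i) (a j - b j) with ⟨h, -⟩ | ⟨h, -⟩
        · left; rw [hu, hδ, h]; ring
        · right; rw [hv, hδ, h]; ring
      have hiD : i ∈ Finset.univ.filter (fun t => a t ≠ b t) := by simp [ne_of_lt haib]
      have hjD : j ∈ Finset.univ.filter (fun t => a t ≠ b t) := by simp [(ne_of_gt hjprop)]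
      rcases hmincase with hcase | hcase
      · have hsub : Finset.univ.filter (fun t => a' t ≠ b t) ⊆
            (Finset.univ.filter (fun t => a t ≠ b t)).erase i := by
          intro t ht
          simp only [Finset.mem_filter] at ht
          rcases eq_or_ne t i with rfl | h1
          · exact absurd (by rw [ha'i, hcase]) ht.2
          rcases eq_or_ne t j with rfl | h2
          · exact Finset.mem_erase.mpr ⟨Ne.symm hijne, hjD⟩
          · refine Finset.mem_erase.mpr ⟨h1, ?_⟩
            simp only [Finset.mem_filter]
            have h3 := ht.2
            rw [ha'off t h1 h2] at h3
            exact ⟨Finset.mem_univ t, h3⟩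
        have := Finset.card_le_card hsub
        rw [Finset.card_erase_of_mem hiD] at this
        omega
      · have hsub : Finset.univ.filter (fun t => a' t ≠ b t) ⊆
            (Finset.univ.filter (fun t => a t ≠ b t)).erase j := by
          intro t ht
          simp only [Finset.mem_filter] at ht
          rcases eq_or_ne t j with rfl | h2
          · exact absurd (by rw [ha'j, hcase]) ht.2
          rcases eq_or_ne t i with rfl | h1
          · exact Finset.mem_erase.mpr ⟨h2, hiD⟩
          · refine Finset.mem_erase.mpr ⟨h2, ?_⟩
            simp only [Finset.mem_filter]
            have h3 := ht.2
            rw [ha'off t h1 h2] at h3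
            exact ⟨Finset.mem_univ t, h3⟩
        have := Finset.card_le_card hsub
        rw [Finset.card_erase_of_mem hjD] at this
        omega
    exact le_trans step1 (ih a' ha'0 ha'M ha'S ha'Tot hcard')


end MyEsymm

open MyEsymm in
/-- If `B` is weakly supermajorized by `A` (both sorted increasingly, entries
positive, partial sums of `A` bounded by those of `B`), then
`e_k(B)/e_{k-1}(B) ≥ e_k(A)/e_{k-1}(A)` for `k = 1, …, q`. -/
theorem stmt2 (q : ℕ) (a b : Fin q → ℝ)
    (ha0 : ∀ i, 0 < a i) (hb0 : ∀ i, 0 < b i)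
    (haM : Monotone a) (hbM : Monotone b)
    (hsum : ∀ k : ℕ, k ≤ q →
      ∑ i ∈ Finset.univ.filter (fun i : Fin q => (i : ℕ) < k), a i ≤
      ∑ i ∈ Finset.univ.filter (fun i : Fin q => (i : ℕ) < k), b i) :
    ∀ k : ℕ, 1 ≤ k → k ≤ q →
      esymm q k a / esymm q (k - 1) a ≤ esymm q k b / esymm q (k - 1) b := by
  intro k hk1 hkq
  have hq1 : 1 ≤ q := le_trans hk1 hkq
  have hS : ∀ m : ℕ, m ≤ q → S q m a ≤ S q m b := fun m hm => hsum m hm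
  set last : Fin q := ⟨q-1, by omega⟩ with hlast
  have hlastval : (last : ℕ) = q - 1 := rfl
  have hTotle : (∑ i, a i) ≤ ∑ i, b i := by
    have := hS q le_rfl
    rwa [S_top, S_top] at this
  set Δ : ℝ := (∑ i, b i) - (∑ i, a i) with hΔ
  have hΔ0 : 0 ≤ Δ := by rw [hΔ]; linarith
  set a1 : Fin q → ℝ := Function.update a last (a last + Δ) with ha1
  have hle : ∀ m : Fin q, m ≤ last := by
    intro m
    have := m.isLt
    exact Fin.le_def.mpr (by rw [hlastval]; omega)
  have step0 : esymm q k a / esymm q (k-1) a ≤ esymm q k a1 / esymm q (k-1) a1 :=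
    ratio_mono hk1 hkq ha0 last (by linarith)
  have ha1last : a1 last = a last + Δ := by rw [ha1, Function.update_self]
  have ha1off : ∀ m, m ≠ last → a1 m = a m := by
    intro m hm
    rw [ha1, Function.update_of_ne hm]
  have ha10 : ∀ i, 0 < a1 i := by
    intro i
    rcases eq_or_ne i last with rfl | h
    · rw [ha1last]; linarith [ha0 last]
    · rw [ha1off i h]; exact ha0 i
  have ha1M : Monotone a1 := by
    intro m m' hmm'
    rcases eq_or_ne m' last with rfl | h2
    · rcases eq_or_ne m last with rfl | h1
      · exact le_rfl
      · rw [ha1off m h1, ha1last]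
        linarith [haM (hle m)]
    · have h1 : m ≠ last := by
        intro hmeq
        exact h2 (le_antisymm (hle m') (hmeq ▸ hmm'))
      rw [ha1off m h1, ha1off m' h2]
      exact haM hmm'
  have ha1Tot : (∑ i, a1 i) = ∑ i, b i := by
    have h2 : ∑ i, a1 i = (a last + Δ) + ∑ t ∈ Finset.univ \ {last}, a t := by
      rw [ha1, Finset.sum_update_of_mem (Finset.mem_univ last)]
    have h3 : ∑ i, a i = a last + ∑ t ∈ Finset.univ \ {last}, a t :=
      Finset.sum_eq_add_sum_sdiff_singleton_of_mem (Finset.mem_univ last) a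
    rw [h2]
    rw [hΔ]
    linarith [h3]
  have ha1S : ∀ m : ℕ, m ≤ q → S q m a1 ≤ S q m b := by
    intro m hm
    rcases eq_or_lt_of_le hm with rfl | hlt
    · rw [S_top, S_top, ha1Tot]
    · have : S q m a1 = S q m a := by
        rw [S, S]
        refine Finset.sum_congr rfl ?_
        intro t ht
        simp only [Finset.mem_filter] at ht
        refine ha1off t ?_
        intro heq
        have : (t : ℕ) = q - 1 := by rw [heq, hlastval]
        omega
      rw [this]
      exact hS m hm
  exact le_trans step0 (chain hk1 hkq hb0 hbM _ a1 ha10 ha1M ha1S ha1Tot le_rfl)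
end

section
/- Let $b > 0$, $c > b$, and $y \in \mathbb{R}$. Then $\int_0^1 \frac{t^b (1-t)^{c-b-1}}{(1+t^2 y^2)^2}\, dt = \frac{\Gamma(b+1)\Gamma(c-b)}{\Gamma(c+1)}\, {}_3F_2\!\left(2, \tfrac{b+1}{2}, \tfrac{b+2}{2}; \tfrac{c+1}{2}, \tfrac{c+2}{2}; -y^2\right)$ for $|y| < 1$. -/
open Real MeasureTheory

noncomputable def poch (a : ℝ) (n : ℕ) : ℝ := Polynomial.eval a (ascPochhammer ℝ n)

lemma poch_zero (a : ℝ) : poch a 0 = 1 := by simp [poch]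

lemma poch_succ (a : ℝ) (n : ℕ) : poch a (n+1) = poch a n * (a + n) := by
  simp [poch, ascPochhammer_succ_right]

lemma poch_pos {a : ℝ} (ha : 0 < a) (n : ℕ) : 0 < poch a n := by
  induction n with
  | zero => simp [poch_zero]
  | succ n ih => rw [poch_succ]; positivity

lemma Gamma_add_nat {a : ℝ} (ha : 0 < a) (n : ℕ) :
    Real.Gamma (a + n) = poch a n * Real.Gamma a := by
  induction n with
  | zero => simp [poch_zero]
  | succ n ih =>
    have h : a + (n+1 : ℕ) = (a + n) + 1 := by push_cast; ring
    rw [h, Real.Gamma_add_one (by positivity), ih, poch_succ]; ring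

lemma poch_dup (a : ℝ) (n : ℕ) :
    poch a (2*n) = 4^n * poch (a/2) n * poch ((a+1)/2) n := by
  induction n with
  | zero => simp [poch_zero]
  | succ n ih =>
    have h : 2*(n+1) = (2*n + 1) + 1 := by ring
    rw [h, poch_succ, poch_succ, ih, poch_succ, poch_succ]
    push_cast; ring

lemma poch_two (n : ℕ) : poch 2 n = (n+1).factorial := by
  induction n with
  | zero => simp [poch_zero]
  | succ n ih =>
    rw [poch_succ, ih, show n+1+1 = (n+1)+1 from rfl, Nat.factorial_succ (n+1)]
    push_cast; ring

lemma beta_complex_eq (p q : ℝ) :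
    Complex.betaIntegral p q =
      ((∫ t in (0:ℝ)..1, t ^ (p-1) * (1-t) ^ (q-1)) : ℝ) := by
  rw [Complex.betaIntegral, ← intervalIntegral.integral_ofReal]
  apply intervalIntegral.integral_congr
  intro x hx
  rw [Set.uIcc_of_le zero_le_one] at hx
  push_cast
  rw [Complex.ofReal_cpow hx.1, Complex.ofReal_cpow (by linarith [hx.2])]
  push_cast
  ring

lemma betaReal {p q : ℝ} (hp : 0 < p) (hq : 0 < q) :
    (∫ t in (0:ℝ)..1, t ^ (p-1) * (1-t) ^ (q-1)) =
      Real.Gamma p * Real.Gamma q / Real.Gamma (p+q) := by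
  have h := Complex.Gamma_mul_Gamma_eq_betaIntegral (s := (p:ℂ)) (t := (q:ℂ))
    (by simpa using hp) (by simpa using hq)
  rw [beta_complex_eq] at h
  have h2 : ((Real.Gamma p * Real.Gamma q : ℝ) : ℂ) =
      ((Real.Gamma (p+q) * ∫ t in (0:ℝ)..1, t ^ (p-1) * (1-t) ^ (q-1) : ℝ) : ℂ) := by
    rw [Complex.Gamma_ofReal, Complex.Gamma_ofReal, ← Complex.ofReal_add,
      Complex.Gamma_ofReal] at h
    push_cast
    exact h
  have h3 := Complex.ofReal_injective h2
  have hG : Real.Gamma (p+q) ≠ 0 := (Real.Gamma_pos_of_pos (by linarith)).ne'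
  field_simp
  linarith [h3]

lemma betaIntegrable {p q : ℝ} (hp : 0 < p) (hq : 0 < q) :
    IntegrableOn (fun t : ℝ => t ^ (p-1) * (1-t) ^ (q-1)) (Set.Ioc 0 1) := by
  have h := Complex.betaIntegral_convergent (u := (p:ℂ)) (v := (q:ℂ))
    (by simpa using hp) (by simpa using hq)
  rw [intervalIntegrable_iff_integrableOn_Ioc_of_le zero_le_one] at h
  have h2 : IntegrableOn
      (fun x : ℝ => ((x ^ (p-1) * (1-x) ^ (q-1) : ℝ) : ℂ)) (Set.Ioc 0 1) := by
    apply h.congr_fun _ measurableSet_Ioc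
    intro x hx
    push_cast
    rw [Complex.ofReal_cpow hx.1.le, Complex.ofReal_cpow (by linarith [hx.2])]
    push_cast
    ring
  have h3 : Integrable (fun x : ℝ => x ^ (p-1) * (1-x) ^ (q-1)) (volume.restrict (Set.Ioc 0 1)) := by
    simpa using h2.re
  exact h3

/-- For `b > 0`, `c > b` and `|y| < 1`:
`∫_0^1 t^b (1-t)^{c-b-1}/(1+t²y²)² dt
  = Γ(b+1)Γ(c-b)/Γ(c+1) · ₃F₂(2,(b+1)/2,(b+2)/2;(c+1)/2,(c+2)/2;-y²)`. -/
theorem stmt14 (b c y : ℝ) (hb : 0 < b) (hc : b < c) (hy : |y| < 1) :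
    (∫ t in (0:ℝ)..1, t ^ b * (1 - t) ^ (c - b - 1) / (1 + t ^ 2 * y ^ 2) ^ 2) =
      Real.Gamma (b + 1) * Real.Gamma (c - b) / Real.Gamma (c + 1) *
        ∑' n : ℕ,
          poch 2 n * poch ((b + 1) / 2) n * poch ((b + 2) / 2) n /
            (poch ((c + 1) / 2) n * poch ((c + 2) / 2) n * n.factorial) *
            (-y ^ 2) ^ n := by
  have hy2 : y ^ 2 < 1 := by
    have := sq_abs y
    nlinarith [abs_nonneg y]
  set F : ℕ → ℝ → ℝ := fun n t =>
    (((n : ℝ) + 1) * (-y ^ 2) ^ n) * (t ^ (b + 2 * (n : ℝ)) * (1 - t) ^ (c - b - 1)) with hF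
  -- integrability of each beta integrand
  have hbeta : ∀ n : ℕ, IntegrableOn
      (fun t : ℝ => t ^ (b + 2 * (n : ℝ)) * (1 - t) ^ (c - b - 1)) (Set.Ioc 0 1) := by
    intro n
    have := betaIntegrable (p := b + 2 * (n : ℝ) + 1) (q := c - b) (by positivity) (by linarith)
    simpa [show b + 2 * (n : ℝ) + 1 - 1 = b + 2 * (n : ℝ) by ring] using this
  have hFint : ∀ n : ℕ, IntegrableOn (F n) (Set.Ioc 0 1) := fun n => (hbeta n).const_mul _
  -- value of each beta integral
  have hval : ∀ n : ℕ,
      (∫ t in Set.Ioc (0:ℝ) 1, t ^ (b + 2 * (n : ℝ)) * (1 - t) ^ (c - b - 1)) =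
        Real.Gamma (b + 1 + (2 * n : ℕ)) * Real.Gamma (c - b) /
          Real.Gamma (c + 1 + (2 * n : ℕ)) := by
    intro n
    rw [← intervalIntegral.integral_of_le zero_le_one]
    have h := betaReal (p := b + 2 * (n : ℝ) + 1) (q := c - b) (by positivity) (by linarith)
    rw [show b + 2 * (n : ℝ) + 1 - 1 = b + 2 * (n : ℝ) by ring] at h
    have e2 : b + 2 * (n : ℝ) + 1 + (c - b) = c + 1 + ((2 * n : ℕ) : ℝ) := by push_cast; ring
    have e1 : b + 2 * (n : ℝ) + 1 = b + 1 + ((2 * n : ℕ) : ℝ) := by push_cast; ring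
    rw [e2, e1] at h
    exact h
  -- bound for the integral of the norm
  set B : ℝ := ∫ t in Set.Ioc (0:ℝ) 1, t ^ b * (1 - t) ^ (c - b - 1) with hB
  have hBint : IntegrableOn (fun t : ℝ => t ^ b * (1 - t) ^ (c - b - 1)) (Set.Ioc 0 1) := by
    have := hbeta 0
    simpa using this
  have hle : ∀ n : ℕ, (∫ t in Set.Ioc (0:ℝ) 1, ‖F n t‖) ≤ ((n : ℝ) + 1) * (y ^ 2) ^ n * B := by
    intro n
    have hmono : ∀ t ∈ Set.Ioc (0:ℝ) 1,
        ‖F n t‖ ≤ (((n : ℝ) + 1) * (y ^ 2) ^ n) * (t ^ b * (1 - t) ^ (c - b - 1)) := by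
      intro t ht
      have ht0 : (0:ℝ) < t := ht.1
      have ht1 : t ≤ 1 := ht.2
      have hsplit : t ^ (b + 2 * (n : ℝ)) = t ^ b * t ^ (2 * (n : ℝ)) := by
        rw [← Real.rpow_add ht0]
      have htle : t ^ (2 * (n : ℝ)) ≤ 1 := Real.rpow_le_one ht0.le ht1 (by positivity)
      have h1t : (0:ℝ) ≤ (1 - t) ^ (c - b - 1) := Real.rpow_nonneg (by linarith) _
      have htb : (0:ℝ) ≤ t ^ b := Real.rpow_nonneg ht0.le _
      rw [hF]
      simp only [norm_mul, norm_pow, Real.norm_eq_abs, abs_neg, abs_pow]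
      rw [abs_of_nonneg (by positivity : (0:ℝ) ≤ (n:ℝ)+1), sq_abs,
        abs_of_nonneg (Real.rpow_nonneg ht0.le _), abs_of_nonneg h1t, hsplit]
      have : t ^ b * t ^ (2 * (n : ℝ)) ≤ t ^ b := by
        nlinarith [Real.rpow_nonneg ht0.le (2 * (n : ℝ))]
      nlinarith [pow_nonneg (sq_nonneg y) n, mul_nonneg htb h1t,
        mul_nonneg (mul_nonneg (by positivity : (0:ℝ) ≤ (n:ℝ)+1) (pow_nonneg (sq_nonneg y) n)) h1t]
    calc (∫ t in Set.Ioc (0:ℝ) 1, ‖F n t‖)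
        ≤ ∫ t in Set.Ioc (0:ℝ) 1,
            (((n : ℝ) + 1) * (y ^ 2) ^ n) * (t ^ b * (1 - t) ^ (c - b - 1)) := by
          apply setIntegral_mono_on (hFint n).norm (hBint.const_mul _) measurableSet_Ioc hmono
      _ = ((n : ℝ) + 1) * (y ^ 2) ^ n * B := by rw [integral_const_mul, hB]
  have hsum : Summable (fun n : ℕ => ∫ t in Set.Ioc (0:ℝ) 1, ‖F n t‖) := by
    have hs : Summable (fun n : ℕ => ((n : ℝ) + 1) * (y ^ 2) ^ n * B) := by
      have h := (summable_choose_mul_geometric_of_norm_lt_one 1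
        (r := (y ^ 2 : ℝ)) (by rwa [Real.norm_eq_abs, abs_of_nonneg (sq_nonneg y)])).mul_right B
      apply h.congr
      intro n
      push_cast [Nat.choose_one_right]
      ring
    exact Summable.of_nonneg_of_le
      (fun n => integral_nonneg fun t => norm_nonneg _) hle hs
  -- pointwise sum of the series
  have htsum : ∀ t ∈ Set.Ioc (0:ℝ) 1,
      (∑' n : ℕ, F n t) = t ^ b * (1 - t) ^ (c - b - 1) / (1 + t ^ 2 * y ^ 2) ^ 2 := by
    intro t ht
    have ht0 : (0:ℝ) < t := ht.1
    have ht1 : t ≤ 1 := ht.2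
    set r : ℝ := -(t ^ 2 * y ^ 2) with hrdef
    have hr : ‖r‖ < 1 := by
      rw [Real.norm_eq_abs, hrdef, abs_neg, abs_of_nonneg (by positivity)]
      have ht2 : t ^ 2 ≤ 1 := by nlinarith
      nlinarith [mul_le_mul_of_nonneg_right ht2 (sq_nonneg y)]
    have hs := (hasSum_choose_mul_geometric_of_norm_lt_one 1 hr).mul_left
      (t ^ b * (1 - t) ^ (c - b - 1))
    have hs2 : HasSum (fun n : ℕ => F n t)
        (t ^ b * (1 - t) ^ (c - b - 1) * (1 / (1 - r) ^ (1 + 1))) := by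
      apply hs.congr_fun
      intro n
      have hsplit : t ^ (b + 2 * (n : ℝ)) = t ^ b * (t ^ 2) ^ n := by
        rw [show (2 * (n : ℝ)) = ((2 * n : ℕ) : ℝ) by push_cast; ring,
          Real.rpow_add ht0, Real.rpow_natCast, pow_mul]
      have hrpow : r ^ n = (-y ^ 2) ^ n * (t ^ 2) ^ n := by
        rw [← mul_pow]; congr 1; rw [hrdef]; ring
      rw [hF]
      simp only [Nat.choose_one_right]
      rw [hsplit, hrpow]
      push_cast
      ring
    rw [hs2.tsum_eq]
    have h1r : 1 - r = 1 + t ^ 2 * y ^ 2 := by rw [hrdef]; ring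
    rw [h1r]
    ring
  -- assemble
  rw [intervalIntegral.integral_of_le zero_le_one]
  rw [setIntegral_congr_fun measurableSet_Ioc (fun t ht => (htsum t ht).symm)]
  rw [← integral_tsum_of_summable_integral_norm hFint hsum]
  -- evaluate each term
  have hterm : ∀ n : ℕ, (∫ t in Set.Ioc (0:ℝ) 1, F n t) =
      Real.Gamma (b + 1) * Real.Gamma (c - b) / Real.Gamma (c + 1) *
        (poch 2 n * poch ((b + 1) / 2) n * poch ((b + 2) / 2) n /
          (poch ((c + 1) / 2) n * poch ((c + 2) / 2) n * n.factorial) *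
          (-y ^ 2) ^ n) := by
    intro n
    simp only [hF]
    rw [integral_const_mul, hval n, Gamma_add_nat (by linarith : (0:ℝ) < b + 1),
      Gamma_add_nat (by linarith : (0:ℝ) < c + 1), poch_dup, poch_dup,
      show b + 1 + 1 = b + 2 by ring, show c + 1 + 1 = c + 2 by ring, poch_two]
    have hGc : Real.Gamma (c + 1) ≠ 0 := (Real.Gamma_pos_of_pos (by linarith)).ne'
    have hp1 : poch ((c + 1) / 2) n ≠ 0 := (poch_pos (by linarith) n).ne'
    have hp2 : poch ((c + 2) / 2) n ≠ 0 := (poch_pos (by linarith) n).ne'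
    have h4 : (4:ℝ) ^ n ≠ 0 := by positivity
    have hfact : (n.factorial : ℝ) ≠ 0 := by positivity
    have hfs : ((n + 1).factorial : ℝ) = ((n : ℝ) + 1) * n.factorial := by
      rw [Nat.factorial_succ]; push_cast; ring
    field_simp
    rw [hfs]
    ring
  rw [tsum_congr hterm, tsum_mul_left]
end
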